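/- The odds function x ↦ Φ(x)/(1 − Φ(x)) is convex on ℝ. -/

import Mathlib

open MeasureTheory ProbabilityTheory

/-- Standard normal density. -/
noncomputable def phi (x : ℝ) : ℝ := (Real.sqrt (2 * Real.pi))⁻¹ * Real.exp (-x ^ 2 / 2)

/-- Standard normal CDF. -/
noncomputable def Phi (x : ℝ) : ℝ := ∫ s in Set.Iic x, phi s

/-- Standard normal hazard function (inverse Mills ratio). -/
noncomputable def lam (x : ℝ) : ℝ := phi x / (1 - Phi x)

/-- Mills-ratio-type function `φ(x)/Φ(x)`. -/
noncomputable def mills (x : ℝ) : ℝ := phi x / Phi x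

open Set Filter Real

lemma phi_pos (x : ℝ) : 0 < phi x := by
  unfold phi
  have h : 0 < Real.sqrt (2 * Real.pi) := Real.sqrt_pos.2 (by positivity)
  positivity

lemma continuous_phi : Continuous phi := by
  unfold phi; fun_prop

lemma phi_eq (x : ℝ) : phi x = (Real.sqrt (2 * Real.pi))⁻¹ * Real.exp (-(1/2) * x ^ 2) := by
  unfold phi; ring_nf

lemma integrable_phi : Integrable phi := by
  have h := (integrable_exp_neg_mul_sq (by norm_num : (0:ℝ) < 1/2)).const_mul
    (Real.sqrt (2 * Real.pi))⁻¹
  refine h.congr ?_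
  filter_upwards with x
  rw [phi_eq]

lemma integral_phi : ∫ x, phi x = 1 := by
  have h : ∫ x : ℝ, phi x = (Real.sqrt (2 * Real.pi))⁻¹ * ∫ x : ℝ, Real.exp (-(1/2) * x ^ 2) := by
    rw [← integral_const_mul]
    congr 1 with x
    rw [phi_eq]
  rw [h, integral_gaussian]
  have : Real.pi / (1/2) = 2 * Real.pi := by ring
  rw [this]
  have h2 : Real.sqrt (2 * Real.pi) ≠ 0 := ne_of_gt (Real.sqrt_pos.2 (by positivity))
  field_simp

lemma hasDerivAt_phi (x : ℝ) : HasDerivAt phi (-x * phi x) x := by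
  have h1 : HasDerivAt (fun y : ℝ => -y ^ 2 / 2) (-x) x := by
    have := ((hasDerivAt_pow 2 x).neg).div_const 2
    exact this.congr_deriv (by norm_num; ring)
  have h2 := (h1.exp).const_mul (Real.sqrt (2 * Real.pi))⁻¹
  unfold phi
  exact h2.congr_deriv (by ring)

lemma hasDerivAt_Phi (x : ℝ) : HasDerivAt Phi (phi x) x := by
  have key : Phi = fun x => Phi 0 + ∫ t in (0:ℝ)..x, phi t := by
    funext y
    have := intervalIntegral.integral_Iic_sub_Iic (integrable_phi.integrableOn (s := Iic 0))
      (integrable_phi.integrableOn (s := Iic y))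
    unfold Phi
    rw [← this]
    ring
  have h : HasDerivAt (fun u => ∫ t in (0:ℝ)..u, phi t) (phi x) x :=
    intervalIntegral.integral_hasDerivAt_right (integrable_phi.intervalIntegrable)
      (continuous_phi.stronglyMeasurableAtFilter _ _) continuous_phi.continuousAt
  rw [key]
  exact (h.const_add (Phi 0))

lemma oneSub_Phi (x : ℝ) : 1 - Phi x = ∫ s in Ioi x, phi s := by
  have := intervalIntegral.integral_Iic_add_Ioi (μ := volume) (b := x)
    (integrable_phi.integrableOn) (integrable_phi.integrableOn)
  rw [integral_phi] at this
  unfold Phi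
  linarith

lemma oneSub_Phi_pos (x : ℝ) : 0 < 1 - Phi x := by
  rw [oneSub_Phi]
  rw [setIntegral_pos_iff_support_of_nonneg_ae]
  · have : Function.support phi = Set.univ := by
      ext y; simp [Function.mem_support, ne_of_gt (phi_pos y)]
    rw [this, Set.univ_inter]
    simp [Real.volume_Ioi]
  · filter_upwards with y using (phi_pos y).le
  · exact integrable_phi.integrableOn

lemma tendsto_phi_atTop : Tendsto phi atTop (nhds 0) := by
  have h1 : Tendsto (fun x : ℝ => -x ^ 2 / 2) atTop atBot := by
    apply Tendsto.atBot_div_const (by norm_num)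
    exact tendsto_neg_atBot_iff.2 (tendsto_pow_atTop (by norm_num))
  have h2 : Tendsto (fun x : ℝ => Real.exp (-x ^ 2 / 2)) atTop (nhds 0) :=
    Real.tendsto_exp_atBot.comp h1
  have h3 := h2.const_mul (Real.sqrt (2 * Real.pi))⁻¹
  rw [mul_zero] at h3
  exact h3

lemma integrableOn_mul_phi (x : ℝ) : IntegrableOn (fun s => s * phi s) (Ioi x) := by
  have h := (integrable_mul_exp_neg_mul_sq (by norm_num : (0:ℝ) < 1/2)).const_mul
    (Real.sqrt (2 * Real.pi))⁻¹
  refine (h.congr ?_).integrableOn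
  filter_upwards with y
  rw [phi_eq]; ring

lemma integral_mul_phi (x : ℝ) : ∫ s in Ioi x, s * phi s = phi x := by
  have hderiv : ∀ y ∈ Ici x, HasDerivAt (fun s => -phi s) (y * phi y) y := by
    intro y _
    have := (hasDerivAt_phi y).neg
    exact this.congr_deriv (by ring)
  have htend : Tendsto (fun s => -phi s) atTop (nhds 0) := by
    simpa using tendsto_phi_atTop.neg
  have := integral_Ioi_of_hasDerivAt_of_tendsto' hderiv (integrableOn_mul_phi x) htend
  rw [this]
  ring

lemma mills_bound {x : ℝ} (hx : 0 < x) : x * (1 - Phi x) ≤ phi x := by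
  have h1 : ∫ s in Ioi x, x * phi s ≤ ∫ s in Ioi x, s * phi s := by
    apply setIntegral_mono_on
    · exact (integrable_phi.integrableOn).const_mul x
    · exact integrableOn_mul_phi x
    · exact measurableSet_Ioi
    · intro s hs
      exact mul_le_mul_of_nonneg_right (le_of_lt hs) (phi_pos s).le
  rw [integral_mul_phi] at h1
  calc x * (1 - Phi x) = ∫ s in Ioi x, x * phi s := by
        rw [oneSub_Phi, ← integral_const_mul]
    _ ≤ phi x := h1

lemma key_nonneg (x : ℝ) : 0 ≤ 2 * phi x - x * (1 - Phi x) := by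
  rcases le_or_gt x 0 with h | h
  · have : x * (1 - Phi x) ≤ 0 :=
      mul_nonpos_of_nonpos_of_nonneg h (oneSub_Phi_pos x).le
    nlinarith [phi_pos x]
  · have := mills_bound h
    nlinarith [phi_pos x]

lemma hasDerivAt_odds (x : ℝ) :
    HasDerivAt (fun x => Phi x / (1 - Phi x)) (phi x / (1 - Phi x) ^ 2) x := by
  have hd : HasDerivAt (fun x => 1 - Phi x) (-phi x) x := by
    simpa using (hasDerivAt_Phi x).const_sub (1:ℝ)
  have h := (hasDerivAt_Phi x).div hd (ne_of_gt (oneSub_Phi_pos x))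
  have hne : (1 - Phi x) ≠ 0 := ne_of_gt (oneSub_Phi_pos x)
  exact h.congr_deriv (by congr 1; ring)

lemma hasDerivAt_odds' (x : ℝ) :
    HasDerivAt (fun x => phi x / (1 - Phi x) ^ 2)
      ((-x * phi x * (1 - Phi x) ^ 2 - phi x * (2 * (1 - Phi x) * -phi x)) /
        ((1 - Phi x) ^ 2) ^ 2) x := by
  have hd : HasDerivAt (fun x => 1 - Phi x) (-phi x) x := by
    simpa using (hasDerivAt_Phi x).const_sub (1:ℝ)
  have hd2 : HasDerivAt (fun x => (1 - Phi x) ^ 2) (2 * (1 - Phi x) * -phi x) x := by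
    have := hd.pow 2
    exact this.congr_deriv (by norm_num)
  exact (hasDerivAt_phi x).div hd2 (by have := oneSub_Phi_pos x; positivity)

/-- the odds function `x ↦ Φ(x)/(1 − Φ(x))` is convex on `ℝ`. -/
theorem stmt_17 : ConvexOn ℝ Set.univ (fun x => Phi x / (1 - Phi x)) := by
  have hderiv : deriv (fun x => Phi x / (1 - Phi x)) = fun x => phi x / (1 - Phi x) ^ 2 := by
    funext x
    exact (hasDerivAt_odds x).deriv
  apply convexOn_of_deriv2_nonneg convex_univ
  · exact fun x _ => (hasDerivAt_odds x).continuousAt.continuousWithinAt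
  · intro x _
    exact (hasDerivAt_odds x).differentiableAt.differentiableWithinAt
  · intro x hx
    rw [interior_univ] at hx
    rw [hderiv]
    exact (hasDerivAt_odds' x).differentiableAt.differentiableWithinAt
  · intro x hx
    have h2 : deriv^[2] (fun x => Phi x / (1 - Phi x)) x
        = deriv (deriv (fun x => Phi x / (1 - Phi x))) x := by
      simp [Function.iterate_succ, Function.iterate_one]
    rw [h2, hderiv, (hasDerivAt_odds' x).deriv]
    have hd := oneSub_Phi_pos x
    have hp := phi_pos x
    have hkey := key_nonneg x
    have : -x * phi x * (1 - Phi x) ^ 2 - phi x * (2 * (1 - Phi x) * -phi x)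
        = phi x * (1 - Phi x) * (2 * phi x - x * (1 - Phi x)) := by ring
    rw [this]
    positivity
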